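/- Let F be the distribution function of a random variable X, q ∈ ℝ, and q⁻ = inf(F⁻¹(F(q))). Then F⁻¹(F((-∞, q⁻))) = (-∞, q⁻), i.e., the preimage under F of the image under F of the open ray below q⁻ equals that ray itself. -/

import Mathlib

open MeasureTheory Set

/-- For the cdf `F` of a random variable `X` and `q⁻ = inf F⁻¹(F q)`
(in the extended reals), the preimage under `F` of the image under `F` of the open
ray below `q⁻` equals that ray itself: `F⁻¹(F((-∞, q⁻))) = (-∞, q⁻)`. -/
theorem stmt1 {Ω : Type*} [MeasurableSpace Ω] (μ : Measure Ω) [IsProbabilityMeasure μ]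
    (X : Ω → ℝ) (hX : Measurable X)
    (F : ℝ → ℝ) (hF : ∀ q, F q = (μ {ω | X ω ≤ q}).toReal)
    (q : ℝ) (qm : EReal)
    (hqm : qm = sInf ((fun x : ℝ => (x : EReal)) '' (F ⁻¹' {F q}))) :
    F ⁻¹' (F '' {x : ℝ | (x : EReal) < qm}) = {x : ℝ | (x : EReal) < qm} := by
  classical
  set ν : Measure ℝ := μ.map X with hν
  have hνprob : IsProbabilityMeasure ν := Measure.isProbabilityMeasure_map hX.aemeasurable
  have hFc : ∀ s : ℝ, F s = ProbabilityTheory.cdf ν s := by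
    intro s
    rw [ProbabilityTheory.cdf_eq_real, measureReal_def, hF, hν, Measure.map_apply hX measurableSet_Iic]
    rfl
  have hmono : Monotone F := by
    intro a b hab
    rw [hFc, hFc]
    exact ProbabilityTheory.monotone_cdf ν hab
  -- membership in P gives qm ≤ ·
  have hPle : ∀ p : ℝ, F p = F q → qm ≤ (p : EReal) := by
    intro p hp
    rw [hqm]
    exact sInf_le ⟨p, hp, rfl⟩
  have hqmq : qm ≤ (q : EReal) := hPle q rfl
  -- if qm = x (a real), then F x = F q
  have hB : ∀ x : ℝ, qm = (x : EReal) → F x = F q := by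
    intro x hx
    have hxq : x ≤ q := by
      have := hqmq
      rw [hx] at this
      exact_mod_cast this
    refine le_antisymm (hmono hxq) ?_
    -- right continuity
    have hrc : ContinuousWithinAt (ProbabilityTheory.cdf ν) (Set.Ici x) x :=
      (ProbabilityTheory.cdf ν).right_continuous x
    have hrc' : Filter.Tendsto (ProbabilityTheory.cdf ν) (nhdsWithin x (Set.Ioi x))
        (nhds (ProbabilityTheory.cdf ν x)) :=
      hrc.mono_left (nhdsWithin_mono x Set.Ioi_subset_Ici_self)
    have hFx : F x = ProbabilityTheory.cdf ν x := hFc x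
    rw [hFx]
    refine ge_of_tendsto hrc' ?_
    filter_upwards [self_mem_nhdsWithin] with s hs
    have hsx : x < s := hs
    -- find p ∈ P with p < s
    have hlt : sInf ((fun x : ℝ => (x : EReal)) '' (F ⁻¹' {F q})) < (s : EReal) := by
      rw [← hqm, hx]
      exact_mod_cast hsx
    obtain ⟨e, ⟨p, hp, rfl⟩, hpe⟩ := sInf_lt_iff.mp hlt
    have hpe' : (p : EReal) < (s : EReal) := hpe
    have hps : p ≤ s := le_of_lt (by exact_mod_cast hpe')
    have : F q ≤ F s := by
      have := hmono hps
      simp only [Set.mem_preimage, Set.mem_singleton_iff] at hp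
      rw [hp] at this
      exact this
    rwa [hFc s] at this
  ext x
  simp only [Set.mem_preimage, Set.mem_image, Set.mem_setOf_eq]
  constructor
  · rintro ⟨y, hy, hFy⟩
    by_contra hxc
    push_neg at hxc
    -- qm ≤ x
    have hyx : y < x := by
      have : (y : EReal) < (x : EReal) := lt_of_lt_of_le hy hxc
      exact_mod_cast this
    have hFxq : F x = F q := by
      rcases lt_or_eq_of_le hxc with h | h
      · -- qm < x : find p ∈ P with p < x
        have hlt : sInf ((fun x : ℝ => (x : EReal)) '' (F ⁻¹' {F q})) < (x : EReal) := by
          rw [← hqm]; exact h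
        obtain ⟨e, ⟨p, hp, rfl⟩, hpe⟩ := sInf_lt_iff.mp hlt
        simp only [Set.mem_preimage, Set.mem_singleton_iff] at hp
        have hpe' : (p : EReal) < (x : EReal) := hpe
        have hpx : p ≤ x := le_of_lt (by exact_mod_cast hpe')
        have hyp : y ≤ p := by
          have : (y : EReal) ≤ (p : EReal) := le_trans (le_of_lt hy) (hPle p hp)
          exact_mod_cast this
        have h1 : F q ≤ F x := hp ▸ hmono hpx
        have h2 : F x ≤ F q := by
          rw [← hFy, ← hp]; exact hmono hyp
        exact le_antisymm h2 h1
      · exact hB x h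
    -- then y ∈ P, so qm ≤ y, contradiction
    have : qm ≤ (y : EReal) := hPle y (hFy.trans hFxq)
    exact absurd hy (not_lt.mpr this)
  · intro hx
    exact ⟨x, hx, rfl⟩
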